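/- Let S and r be parameters with 0 < S < 4r, and let u₀ be the standing wave. Then there exists a constant C > 0 such that lim_{x→+∞} u₀(x)·e^{√S·x} = C, lim_{x→−∞} (1 − u₀(x))·e^{−√S·x} = C, and lim_{x→+∞} u₀'(x)·e^{√S·x} = −√S·C. -/

import Mathlib

open Real Filter Topology

open Set

noncomputable def fpoly (u : ℝ) : ℝ := u * (2 * u - 1) * (1 - u)

noncomputable def Ppot (S r u : ℝ) : ℝ :=
  r^2/(8*S) * (Real.exp ((4*S/r)*(u - u^2)) - 1) - r/2 * (u - u^2)

theorem Ppot_symm (S r u : ℝ) : Ppot S r (1-u) = Ppot S r u := by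
  unfold Ppot
  have h : (1-u) - (1-u)^2 = u - u^2 := by ring
  rw [h]

-- Taylor bound: for 0 ≤ t ≤ 1, |exp t - 1 - t - t^2/2| ≤ t^3
theorem exp_taylor2 {t : ℝ} (h0 : 0 ≤ t) (h1 : t ≤ 1) :
    |Real.exp t - (1 + t + t^2/2)| ≤ t^3 := by
  have hb := Real.exp_bound (x := t) (by rw [abs_of_nonneg h0]; exact h1) (n := 3) (by norm_num)
  have hsum : ∑ i ∈ Finset.range 3, t ^ i / i.factorial = 1 + t + t^2/2 := by
    norm_num [Finset.sum_range_succ, Nat.factorial]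
  rw [hsum] at hb
  rw [abs_of_nonneg h0] at hb
  calc |Real.exp t - (1 + t + t^2/2)| ≤ t ^ 3 * ((3:ℕ).succ / ((3:ℕ).factorial * 3)) := hb
    _ ≤ t^3 := by
        have : ((3:ℕ).succ / ((3:ℕ).factorial * 3) : ℝ) ≤ 1 := by norm_num [Nat.factorial]
        nlinarith [pow_nonneg h0 3]

theorem Ppot_est (S r : ℝ) (hS : 0 < S) (hSr : S < 4*r) {u : ℝ} (hu0 : 0 ≤ u) (hu1 : u ≤ 1)
    (hud : u ≤ r/(4*S)) : |Ppot S r u - S * u^2| ≤ (2*S + 8*S^2/r) * u^3 := by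
  have hr : 0 < r := by linarith
  set t := (4*S/r)*(u - u^2) with ht
  have huu : 0 ≤ u - u^2 := by nlinarith
  have ht0 : 0 ≤ t := by positivity
  have ht1 : t ≤ 1 := by
    have h1 : u - u^2 ≤ u := by nlinarith
    have : t ≤ (4*S/r) * u := by
      apply mul_le_mul_of_nonneg_left h1 (by positivity)
    have h2 : (4*S/r) * u ≤ (4*S/r) * (r/(4*S)) := by
      apply mul_le_mul_of_nonneg_left hud (by positivity)
    have h3 : (4*S/r) * (r/(4*S)) = 1 := by field_simp
    linarith
  have hR := exp_taylor2 ht0 ht1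
  set R := Real.exp t - (1 + t + t^2/2) with hRdef
  have hP : Ppot S r u - S*u^2 = S*((u-u^2)^2 - u^2) + r^2/(8*S) * R := by
    rw [hRdef, Ppot, ht]
    field_simp
    ring
  have h1 : |S*((u-u^2)^2 - u^2)| ≤ 2*S*u^3 := by
    rw [abs_mul, abs_of_nonneg hS.le]
    have : |(u-u^2)^2 - u^2| ≤ 2*u^3 := by
      rw [abs_le]; constructor <;> nlinarith
    nlinarith
  have h2 : |r^2/(8*S) * R| ≤ (8*S^2/r)*u^3 := by
    rw [abs_mul, abs_of_nonneg (by positivity : (0:ℝ) ≤ r^2/(8*S))]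
    have hRb : |R| ≤ t^3 := hR
    have : r^2/(8*S) * |R| ≤ r^2/(8*S) * t^3 := by
      apply mul_le_mul_of_nonneg_left hRb (by positivity)
    have heq : r^2/(8*S) * t^3 = (8*S^2/r)*(u-u^2)^3 := by
      rw [ht]; field_simp; ring
    have hle : (8*S^2/r)*(u-u^2)^3 ≤ (8*S^2/r)*u^3 := by
      apply mul_le_mul_of_nonneg_left _ (by positivity)
      have : u - u^2 ≤ u := by nlinarith
      exact pow_le_pow_left₀ huu this 3
    linarith
  calc |Ppot S r u - S*u^2| ≤ |S*((u-u^2)^2 - u^2)| + |r^2/(8*S) * R| := by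
        rw [hP]; exact abs_add_le _ _
    _ ≤ 2*S*u^3 + (8*S^2/r)*u^3 := by linarith
    _ = (2*S + 8*S^2/r)*u^3 := by ring

theorem abs_sqrt_sub_sqrt_le {a b : ℝ} (ha : 0 ≤ a) (hb : 0 < b) :
    |Real.sqrt a - Real.sqrt b| ≤ |a - b| / Real.sqrt b := by
  have hsb : 0 < Real.sqrt b := Real.sqrt_pos.2 hb
  rw [le_div_iff₀ hsb]
  have hmul : (Real.sqrt a - Real.sqrt b) * (Real.sqrt a + Real.sqrt b) = a - b := by
    have h1 := Real.sq_sqrt ha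
    have h2 := Real.sq_sqrt hb.le
    nlinarith
  calc |Real.sqrt a - Real.sqrt b| * Real.sqrt b
      ≤ |Real.sqrt a - Real.sqrt b| * (Real.sqrt a + Real.sqrt b) := by
        apply mul_le_mul_of_nonneg_left _ (abs_nonneg _)
        nlinarith [Real.sqrt_nonneg a]
    _ = |(Real.sqrt a - Real.sqrt b) * (Real.sqrt a + Real.sqrt b)| := by
        rw [abs_mul, abs_of_nonneg (by positivity : (0:ℝ) ≤ Real.sqrt a + Real.sqrt b)]
    _ = |a - b| := by rw [hmul]

theorem sqrt_S_sq (S : ℝ) (hS : 0 ≤ S) {u : ℝ} (hu : 0 ≤ u) :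
    Real.sqrt (S * u^2) = Real.sqrt S * u := by
  rw [Real.sqrt_mul hS, Real.sqrt_sq hu]

theorem sqrtP_est (S r : ℝ) (hS : 0 < S) (hSr : S < 4*r) {u : ℝ} (hu0 : 0 < u) (hu1 : u ≤ 1)
    (hud : u ≤ r/(4*S)) (hP : 0 ≤ Ppot S r u) :
    |Real.sqrt (Ppot S r u) - Real.sqrt S * u| ≤ ((2*S + 8*S^2/r)/Real.sqrt S) * u^2 := by
  have hb : 0 < S * u^2 := by positivity
  have h := abs_sqrt_sub_sqrt_le hP hb
  rw [sqrt_S_sq S hS.le hu0.le] at h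
  have hest := Ppot_est S r hS hSr hu0.le hu1 hud
  have hsS : 0 < Real.sqrt S := Real.sqrt_pos.2 hS
  calc |Real.sqrt (Ppot S r u) - Real.sqrt S * u| ≤ |Ppot S r u - S * u^2| / (Real.sqrt S * u) := h
    _ ≤ ((2*S + 8*S^2/r) * u^3) / (Real.sqrt S * u) := by
        apply div_le_div_of_nonneg_right hest (by positivity) |>.trans_eq rfl
    _ = ((2*S + 8*S^2/r)/Real.sqrt S) * u^2 := by field_simp

theorem Ppot_alt (S r : ℝ) (hS : 0 < S) (hr : 0 < r) (u : ℝ) :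
    Ppot S r u = r^2/(8*S) * (Real.exp ((4*S/r)*(u - u^2)) - 1 - (4*S/r)*(u - u^2)) := by
  unfold Ppot
  field_simp
  ring

theorem Ppot_pos (S r : ℝ) (hS : 0 < S) (hr : 0 < r) {u : ℝ} (h0 : 0 < u) (h1 : u < 1) :
    0 < Ppot S r u := by
  rw [Ppot_alt S r hS hr]
  have ht : 0 < (4*S/r)*(u - u^2) := by
    have h : 0 < u - u^2 := by nlinarith
    exact mul_pos (by positivity) h
  have := Real.add_one_lt_exp (ne_of_gt ht)
  have h2 : 0 < r^2/(8*S) := by positivity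
  nlinarith

theorem Ppot_continuous (S r : ℝ) : Continuous (Ppot S r) := by
  unfold Ppot
  fun_prop

theorem Ppot_hasDerivAt (S r : ℝ) (hS : 0 < S) (hr : 0 < r) (y : ℝ) :
    HasDerivAt (Ppot S r)
      (r^2/(8*S) * (Real.exp ((4*S/r)*(y - y^2)) * ((4*S/r)*(1 - 2*y))) - r/2*(1 - 2*y)) y := by
  have h1 : HasDerivAt (fun y : ℝ => y - y^2) (1 - 2*y) y := by
    exact ((hasDerivAt_id' y).sub (hasDerivAt_pow 2 y)).congr_deriv (by norm_num)
  have h2 : HasDerivAt (fun y : ℝ => (4*S/r)*(y - y^2)) ((4*S/r)*(1 - 2*y)) y :=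
    h1.const_mul _
  have h3 := h2.exp
  have h4 : HasDerivAt (fun y : ℝ => Real.exp ((4*S/r)*(y - y^2)) - 1)
      (Real.exp ((4*S/r)*(y - y^2)) * ((4*S/r)*(1 - 2*y))) y := h3.sub_const 1
  have h5 := h4.const_mul (r^2/(8*S))
  have h6 := h1.const_mul (r/2)
  exact h5.sub h6

theorem sqrtPpot_lipschitz (S r : ℝ) (hS : 0 < S) (hr : 0 < r) {m : ℝ} (hm : 0 < m)
    (hm2 : m ≤ 1/2) :
    ∃ Kl : NNReal, LipschitzOnWith Kl (fun y => -Real.sqrt (Ppot S r y)) (Icc m (1/2)) := by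
  set s : Set ℝ := Icc m (1/2) with hsdef
  have hsub : ∀ y ∈ s, 0 < Ppot S r y := by
    rintro y ⟨hy1, hy2⟩
    exact Ppot_pos S r hS hr (lt_of_lt_of_le hm hy1) (lt_of_le_of_lt hy2 (by norm_num))
  set P' : ℝ → ℝ := fun y =>
    r^2/(8*S) * (Real.exp ((4*S/r)*(y - y^2)) * ((4*S/r)*(1 - 2*y))) - r/2*(1 - 2*y) with hP'def
  set F' : ℝ → ℝ := fun y => -(P' y / (2 * Real.sqrt (Ppot S r y))) with hF'def
  have hFd : ∀ y ∈ s, HasDerivAt (fun y => -Real.sqrt (Ppot S r y)) (F' y) y := by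
    intro y hy
    exact (((Ppot_hasDerivAt S r hS hr y).sqrt (hsub y hy).ne')).neg
  -- continuity of F' on s
  have hF'cont : ContinuousOn F' s := by
    apply ContinuousOn.neg
    apply ContinuousOn.div
    · apply Continuous.continuousOn
      have := Ppot_continuous S r
      fun_prop
    · apply ContinuousOn.mul continuousOn_const
      apply ContinuousOn.sqrt
      exact (Ppot_continuous S r).continuousOn
    · intro y hy
      have := Real.sqrt_pos.2 (hsub y hy)
      positivity
  obtain ⟨c, hc⟩ := (isCompact_Icc).exists_bound_of_continuousOn hF'cont
  refine ⟨‖c‖₊, ?_⟩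
  apply Convex.lipschitzOnWith_of_nnnorm_deriv_le (fun y hy => (hFd y hy).differentiableAt) ?_
    (convex_Icc m (1/2))
  intro y hy
  rw [← NNReal.coe_le_coe, coe_nnnorm, coe_nnnorm, (hFd y hy).deriv]
  exact (hc y hy).trans (le_abs_self c)

theorem asympTop (S r : ℝ) (hS : 0 < S) (hSr : S < 4*r) (v : ℝ → ℝ)
    (hv : Differentiable ℝ v) (hpos : ∀ x, 0 < v x) (hlim : Tendsto v atTop (𝓝 0))
    (hder : ∀ x, deriv v x = -Real.sqrt (Ppot S r (v x))) :
    ∃ C : ℝ, 0 < C ∧ Tendsto (fun x => v x * Real.exp (Real.sqrt S * x)) atTop (𝓝 C) ∧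
      Tendsto (fun x => deriv v x * Real.exp (Real.sqrt S * x)) atTop
        (𝓝 (-(Real.sqrt S) * C)) := by
  have hr : 0 < r := by linarith
  set K := 2*S + 8*S^2/r with hKdef
  have hK : 0 < K := by positivity
  set δ : ℝ := min (min 1 (r/(4*S))) (S/(2*K)) with hδdef
  have hδ : 0 < δ := by
    apply lt_min (lt_min one_pos (by positivity)) (by positivity)
  obtain ⟨N, hN⟩ : ∃ N : ℝ, ∀ x ≥ N, v x < δ :=
    eventually_atTop.1 (hlim.eventually (gt_mem_nhds hδ))
  have hsS : 0 < Real.sqrt S := Real.sqrt_pos.2 hS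
  set b : ℝ := Real.sqrt (S/2) with hbdef
  have hb : 0 < b := Real.sqrt_pos.2 (by positivity)
  have hδ1 : δ ≤ 1 := (min_le_left _ _).trans (min_le_left _ _)
  have hδd : δ ≤ r/(4*S) := (min_le_left _ _).trans (min_le_right _ _)
  have hδK : δ ≤ S/(2*K) := min_le_right _ _
  clear_value K δ b
  -- pointwise facts for x ≥ N
  have key : ∀ x, N ≤ x → Ppot S r (v x) ≥ (S/2) * (v x)^2 ∧
      deriv v x ≤ -(b * v x) ∧ |deriv v x + Real.sqrt S * v x| ≤ (K/Real.sqrt S) * (v x)^2 := by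
    intro x hx
    have hvx := hpos x
    have hvδ := (hN x hx).le
    have hu1 : v x ≤ 1 := hvδ.trans hδ1
    have hud : v x ≤ r/(4*S) := hvδ.trans hδd
    have huK : v x ≤ S/(2*K) := hvδ.trans hδK
    have hest := Ppot_est S r hS hSr hvx.le hu1 hud
    rw [← hKdef] at hest
    have hPlow : Ppot S r (v x) ≥ (S/2) * (v x)^2 := by
      have h1 : Ppot S r (v x) - S * (v x)^2 ≥ -(K * (v x)^3) := by
        have := abs_le.1 hest; linarith [this.1]
      have h2 : K * (v x)^3 ≤ (S/2) * (v x)^2 := by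
        have : K * v x ≤ S/2 := by
          calc K * v x ≤ K * (S/(2*K)) := by
                exact mul_le_mul_of_nonneg_left huK hK.le
            _ = S/2 := by field_simp
        nlinarith [sq_nonneg (v x), hvx.le]
      have h3 : S * v x^2 - S/2 * v x^2 = S/2 * v x^2 := by ring
      linarith
    refine ⟨hPlow, ?_, ?_⟩
    · rw [hder x]
      have h1 : Real.sqrt ((S/2) * (v x)^2) ≤ Real.sqrt (Ppot S r (v x)) :=
        Real.sqrt_le_sqrt hPlow
      rw [sqrt_S_sq (S/2) (by positivity) hvx.le, ← hbdef] at h1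
      linarith
    · have hP0 : 0 ≤ Ppot S r (v x) := le_trans (by positivity) hPlow
      have := sqrtP_est S r hS hSr hvx hu1 hud hP0
      rw [← hKdef] at this
      rw [hder x]
      rw [show -Real.sqrt (Ppot S r (v x)) + Real.sqrt S * v x
          = -(Real.sqrt (Ppot S r (v x)) - Real.sqrt S * v x) by ring, abs_neg]
      exact this
  -- exponential decay
  set C₁ : ℝ := v N * Real.exp (b*N) with hC₁def
  have hC₁ : 0 < C₁ := mul_pos (hpos N) (Real.exp_pos _)
  have hdecay : ∀ x, N ≤ x → v x ≤ C₁ * Real.exp (-(b*x)) := by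
    intro x hx
    have hanti : AntitoneOn (fun y => v y * Real.exp (b*y)) (Ici N) := by
      apply antitoneOn_of_deriv_nonpos (convex_Ici N)
      · exact ((hv.continuous.mul (Real.continuous_exp.comp (continuous_const.mul continuous_id))).continuousOn)
      · intro y hy
        exact (hv y).mul ((Real.differentiable_exp.comp ((differentiable_const b).mul differentiable_id)) y) |>.differentiableWithinAt
      · intro y hy
        rw [interior_Ici] at hy
        have he : HasDerivAt (fun z => Real.exp (b*z)) (Real.exp (b*y) * b) y := by
          simpa using ((hasDerivAt_id y).const_mul b).exp
        have hdy : HasDerivAt (fun y => v y * Real.exp (b*y))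
            (deriv v y * Real.exp (b*y) + v y * (Real.exp (b*y) * b)) y :=
          ((hv y).hasDerivAt).mul he
        rw [hdy.deriv]
        have := (key y hy.le).2.1
        nlinarith [Real.exp_pos (b*y), (hpos y).le]
    have hle : v x * Real.exp (b*x) ≤ C₁ := hanti (self_mem_Ici) hx hx
    calc v x = (v x * Real.exp (b*x)) * Real.exp (-(b*x)) := by
          rw [mul_assoc, ← Real.exp_add, add_neg_cancel, Real.exp_zero, mul_one]
      _ ≤ C₁ * Real.exp (-(b*x)) := mul_le_mul_of_nonneg_right hle (Real.exp_pos _).le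

  -- the function g = log v + sqrt S * x
  set g : ℝ → ℝ := fun y => Real.log (v y) + Real.sqrt S * y with hgdef
  have hgd : ∀ x : ℝ, HasDerivAt g (deriv v x / v x + Real.sqrt S) x := by
    intro x
    have h1 : HasDerivAt (fun y => Real.log (v y)) (deriv v x / v x) x :=
      ((hv x).hasDerivAt).log (hpos x).ne'
    have h2 : HasDerivAt (fun y : ℝ => Real.sqrt S * y) (Real.sqrt S) x := by
      simpa using (hasDerivAt_id x).const_mul (Real.sqrt S)
    exact h1.add h2
  set M : ℝ := (K / Real.sqrt S) * C₁ with hMdef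
  have hM : 0 < M := by positivity
  have hgbound : ∀ x, N ≤ x → |deriv v x / v x + Real.sqrt S| ≤ M * Real.exp (-(b*x)) := by
    intro x hx
    have hvx := hpos x
    have h := (key x hx).2.2
    have heq : deriv v x / v x + Real.sqrt S = (deriv v x + Real.sqrt S * v x) / v x := by
      field_simp
    rw [heq, abs_div, abs_of_pos hvx, div_le_iff₀ hvx]
    calc |deriv v x + Real.sqrt S * v x| ≤ K/Real.sqrt S * v x ^2 := h
      _ = (K/Real.sqrt S * v x) * v x := by ring
      _ ≤ (M * Real.exp (-(b*x))) * v x := by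
          apply mul_le_mul_of_nonneg_right _ hvx.le
          calc K/Real.sqrt S * v x ≤ K/Real.sqrt S * (C₁ * Real.exp (-(b*x))) := by
                exact mul_le_mul_of_nonneg_left (hdecay x hx) (by positivity)
            _ = M * Real.exp (-(b*x)) := by rw [hMdef]; ring
  have hexpd : ∀ x : ℝ, HasDerivAt (fun y => Real.exp (-(b*y))) (-b * Real.exp (-(b*x))) x := by
    intro x
    have : HasDerivAt (fun y : ℝ => -(b*y)) (-b) x := by
      simpa using (hasDerivAt_id x).const_mul (-b)
    simpa [mul_comm] using this.exp
  set ψ : ℝ → ℝ := fun y => g y - (M/b) * Real.exp (-(b*y)) with hψdef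
  set χ : ℝ → ℝ := fun y => g y + (M/b) * Real.exp (-(b*y)) with hχdef
  have hψd : ∀ x : ℝ, HasDerivAt ψ
      (deriv v x / v x + Real.sqrt S + M * Real.exp (-(b*x))) x := by
    intro x
    have := (hgd x).sub (((hexpd x).const_mul (M/b)))
    have hMb : M / b * b = M := div_mul_cancel₀ M hb.ne'
    exact this.congr_deriv (by linear_combination (Real.exp (-(b*x))) * hMb)
  have hχd : ∀ x : ℝ, HasDerivAt χ
      (deriv v x / v x + Real.sqrt S - M * Real.exp (-(b*x))) x := by
    intro x
    have := (hgd x).add (((hexpd x).const_mul (M/b)))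
    have hMb : M / b * b = M := div_mul_cancel₀ M hb.ne'
    exact this.congr_deriv (by linear_combination (-(Real.exp (-(b*x)))) * hMb)
  have hψmono : MonotoneOn ψ (Ici N) := by
    apply monotoneOn_of_deriv_nonneg (convex_Ici N)
    · exact (fun x _ => ((hψd x).differentiableAt).continuousAt.continuousWithinAt)
    · exact fun x _ => ((hψd x).differentiableAt).differentiableWithinAt
    · intro x hx
      rw [interior_Ici] at hx
      rw [(hψd x).deriv]
      have := abs_le.1 (hgbound x hx.le)
      linarith [this.1]
  have hχanti : AntitoneOn χ (Ici N) := by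
    apply antitoneOn_of_deriv_nonpos (convex_Ici N)
    · exact (fun x _ => ((hχd x).differentiableAt).continuousAt.continuousWithinAt)
    · exact fun x _ => ((hχd x).differentiableAt).differentiableWithinAt
    · intro x hx
      rw [interior_Ici] at hx
      rw [(hχd x).deriv]
      have := abs_le.1 (hgbound x hx.le)
      linarith [this.2]
  have hψχ : ∀ x, N ≤ x → ψ x ≤ χ N := by
    intro x hx
    have h1 : ψ x ≤ χ x := by
      rw [hψdef, hχdef]
      simp only
      have : 0 ≤ (M/b) * Real.exp (-(b*x)) := by positivity
      linarith
    exact h1.trans (hχanti self_mem_Ici hx hx)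
  -- limit of ψ
  set ψhat : ℝ → ℝ := fun x => ψ (max x N) with hψhatdef
  have hψhatmono : Monotone ψhat := by
    intro x y hxy
    exact hψmono (le_max_right x N) (le_max_right y N) (max_le_max hxy le_rfl)
  have hψhatbdd : BddAbove (Set.range ψhat) := by
    refine ⟨χ N, ?_⟩
    rintro z ⟨x, rfl⟩
    exact hψχ _ (le_max_right x N)
  have hψhatlim := tendsto_atTop_ciSup hψhatmono hψhatbdd
  set ℓ : ℝ := ⨆ x, ψhat x with hℓdef
  have hψlim : Tendsto ψ atTop (𝓝 ℓ) := by
    apply hψhatlim.congr'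
    filter_upwards [eventually_ge_atTop N] with x hx
    rw [hψhatdef]
    simp only
    rw [max_eq_left hx]
  have hexp0 : Tendsto (fun x => (M/b) * Real.exp (-(b*x))) atTop (𝓝 0) := by
    have h1 : Tendsto (fun x : ℝ => b*x) atTop atTop :=
      Tendsto.const_mul_atTop hb tendsto_id
    have h2 : Tendsto (fun x : ℝ => -(b*x)) atTop atBot := tendsto_neg_atTop_atBot.comp h1
    have h3 : Tendsto (fun x : ℝ => Real.exp (-(b*x))) atTop (𝓝 0) :=
      Real.tendsto_exp_atBot.comp h2
    simpa using h3.const_mul (M/b)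
  have hglim : Tendsto g atTop (𝓝 ℓ) := by
    have := hψlim.add hexp0
    rw [add_zero] at this
    apply this.congr
    intro x
    rw [hψdef]
    ring
  refine ⟨Real.exp ℓ, Real.exp_pos ℓ, ?_, ?_⟩
  · have heq : (fun x => v x * Real.exp (Real.sqrt S * x)) = fun x => Real.exp (g x) := by
      funext x
      rw [hgdef]
      simp only
      rw [Real.exp_add, Real.exp_log (hpos x)]
    rw [heq]
    exact (Real.continuous_exp.tendsto ℓ).comp hglim
  · -- derivative limit
    have hvelim : Tendsto (fun x => v x * Real.exp (Real.sqrt S * x)) atTop (𝓝 (Real.exp ℓ)) := by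
      have heq : (fun x => v x * Real.exp (Real.sqrt S * x)) = fun x => Real.exp (g x) := by
        funext x
        rw [hgdef]
        simp only
        rw [Real.exp_add, Real.exp_log (hpos x)]
      rw [heq]
      exact (Real.continuous_exp.tendsto ℓ).comp hglim
    have hblt : Real.sqrt S < 2*b := by
      have h1 : b^2 = S/2 := by rw [hbdef]; exact Real.sq_sqrt (by positivity)
      have h2 : (Real.sqrt S)^2 = S := Real.sq_sqrt hS.le
      nlinarith [hsS, hb]
    have hT1 : Tendsto (fun x => (deriv v x + Real.sqrt S * v x) * Real.exp (Real.sqrt S * x))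
        atTop (𝓝 0) := by
      apply squeeze_zero_norm' (a := fun x => (K/Real.sqrt S) * C₁^2 *
        Real.exp ((Real.sqrt S - 2*b) * x))
      · filter_upwards [eventually_ge_atTop N] with x hx
        have h := (key x hx).2.2
        have hd := hdecay x hx
        rw [Real.norm_eq_abs, abs_mul, abs_of_pos (Real.exp_pos _)]
        calc |deriv v x + Real.sqrt S * v x| * Real.exp (Real.sqrt S * x)
            ≤ (K/Real.sqrt S * v x ^2) * Real.exp (Real.sqrt S * x) := by
              exact mul_le_mul_of_nonneg_right h (Real.exp_pos _).le
          _ ≤ (K/Real.sqrt S * (C₁ * Real.exp (-(b*x)))^2) * Real.exp (Real.sqrt S * x) := by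
              apply mul_le_mul_of_nonneg_right _ (Real.exp_pos _).le
              apply mul_le_mul_of_nonneg_left _ (by positivity)
              apply pow_le_pow_left₀ (hpos x).le hd
          _ = (K/Real.sqrt S) * C₁^2 * Real.exp ((Real.sqrt S - 2*b) * x) := by
              rw [mul_pow, ← Real.exp_nat_mul]
              rw [show (Real.sqrt S - 2*b) * x = (2:ℕ) * (-(b*x)) + Real.sqrt S * x by push_cast; ring]
              rw [Real.exp_add]
              ring
      · have h1 : Tendsto (fun x : ℝ => (Real.sqrt S - 2*b)*x) atTop atBot := by
          apply Tendsto.const_mul_atTop_of_neg (by linarith : Real.sqrt S - 2*b < 0) tendsto_id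
        have h3 : Tendsto (fun x : ℝ => Real.exp ((Real.sqrt S - 2*b)*x)) atTop (𝓝 0) :=
          Real.tendsto_exp_atBot.comp h1
        simpa using h3.const_mul ((K/Real.sqrt S) * C₁^2)
    have hfin := hT1.add (hvelim.const_mul (-(Real.sqrt S)))
    rw [zero_add] at hfin
    apply hfin.congr
    intro x
    ring

theorem standing_wave_asymptotics (S r : ℝ) (hS : 0 < S) (hSr : S < 4 * r)
    (u₀ : ℝ → ℝ) (hu : ContDiff ℝ 2 u₀)
    (hode : ∀ x : ℝ, deriv (deriv u₀) x + S * fpoly (u₀ x)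
      + (2 * S / r) * (2 * u₀ x - 1) * (deriv u₀ x) ^ 2 = 0)
    (hlim1 : Tendsto u₀ atBot (𝓝 1)) (hlim0 : Tendsto u₀ atTop (𝓝 0))
    (hnorm : u₀ 0 = 1 / 2) (hmono : StrictAnti u₀)
    (hbound : ∀ x : ℝ, 0 < u₀ x ∧ u₀ x < 1) :
    ∃ C : ℝ, 0 < C ∧
      Tendsto (fun x : ℝ => u₀ x * Real.exp (Real.sqrt S * x)) atTop (𝓝 C) ∧
      Tendsto (fun x : ℝ => (1 - u₀ x) * Real.exp (-(Real.sqrt S) * x)) atBot (𝓝 C) ∧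
      Tendsto (fun x : ℝ => deriv u₀ x * Real.exp (Real.sqrt S * x)) atTop
        (𝓝 (-(Real.sqrt S) * C)) := by
  have hr : 0 < r := by linarith
  have hdiff : Differentiable ℝ u₀ := hu.differentiable (by norm_num)
  have hD1 : ContDiff ℝ 1 (deriv u₀) := by
    have h2 : ContDiff ℝ ((1:ℕ∞)+1) u₀ := by exact_mod_cast hu
    exact (contDiff_succ_iff_deriv.mp h2).2.2
  have hdd : Differentiable ℝ (deriv u₀) := hD1.differentiable (by norm_num)
  -- derivative is nonpositive
  have hdnp : ∀ x, deriv u₀ x ≤ 0 := by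
    intro x
    have h := (hdiff x).hasDerivAt
    rw [hasDerivAt_iff_tendsto_slope] at h
    have h2 : Tendsto (slope u₀ x) (𝓝[>] x) (𝓝 (deriv u₀ x)) :=
      h.mono_left (nhdsWithin_mono x (fun y hy => LT.lt.ne' hy))
    apply le_of_tendsto h2
    filter_upwards [self_mem_nhdsWithin] with y hy
    have hlt : u₀ y < u₀ x := hmono hy
    rw [slope_def_field]
    apply div_nonpos_of_nonpos_of_nonneg <;> [linarith; linarith [mem_Ioi.1 hy]]
  -- energy function
  set E : ℝ → ℝ := fun x => ((deriv u₀ x)^2 + r/2*(u₀ x - (u₀ x)^2) + r^2/(8*S)) *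
      Real.exp ((4*S/r)*((u₀ x)^2 - u₀ x)) with hEdef
  have hE' : ∀ x, HasDerivAt E 0 x := by
    intro x
    have hu_x : HasDerivAt u₀ (deriv u₀ x) x := (hdiff x).hasDerivAt
    have hd_x : HasDerivAt (deriv u₀) (deriv (deriv u₀) x) x := (hdd x).hasDerivAt
    have h1 : HasDerivAt (fun y => (deriv u₀ y)^2) (2 * deriv u₀ x * deriv (deriv u₀) x) x := by
      exact (hd_x.pow 2).congr_deriv (by norm_num <;> ring)
    have h2 : HasDerivAt (fun y => u₀ y - (u₀ y)^2) (deriv u₀ x - 2*u₀ x*deriv u₀ x) x := by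
      exact (hu_x.sub (hu_x.pow 2)).congr_deriv (by norm_num <;> ring)
    have h3 : HasDerivAt (fun y => (u₀ y)^2 - u₀ y) (2*u₀ x*deriv u₀ x - deriv u₀ x) x := by
      exact ((hu_x.pow 2).sub hu_x).congr_deriv (by norm_num <;> ring)
    have h4 := (h3.const_mul (4*S/r)).exp
    have h5 := (h1.add (h2.const_mul (r/2))).add_const (r^2/(8*S))
    have h6 := h5.mul h4
    have hode' := hode x
    unfold fpoly at hode'
    have hddval : deriv (deriv u₀) x = -(S * (u₀ x * (2*u₀ x - 1)*(1 - u₀ x)))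
        - (2*S/r)*(2*u₀ x - 1)*(deriv u₀ x)^2 := by linarith
    rw [hEdef]
    refine h6.congr_deriv ?_
    rw [hddval]
    simp only [Pi.add_apply]
    field_simp
    ring
  have hEconst : ∀ x, E x = E 0 :=
    fun x => is_const_of_deriv_eq_zero (fun y => (hE' y).differentiableAt)
      (fun y => (hE' y).deriv) x 0
  set E0 : ℝ := E 0 with hE0def
  have hEexp : ∀ x, (deriv u₀ x)^2 = E0 * (Real.exp ((4*S/r)*((u₀ x)^2 - u₀ x)))⁻¹
      - r/2*(u₀ x - (u₀ x)^2) - r^2/(8*S) := by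
    intro x
    have h := hEconst x
    rw [hEdef] at h
    simp only at h
    have hexp : (0:ℝ) < Real.exp ((4*S/r)*((u₀ x)^2 - u₀ x)) := Real.exp_pos _
    have := (eq_div_iff hexp.ne').mpr h
    rw [div_eq_mul_inv] at this
    linear_combination this
  -- limit of the square of the derivative
  have hcomp : Tendsto (fun x => E0 * (Real.exp ((4*S/r)*((u₀ x)^2 - u₀ x)))⁻¹
      - r/2*(u₀ x - (u₀ x)^2) - r^2/(8*S)) atTop (𝓝 (E0 - r^2/(8*S))) := by
    have hcont : Continuous (fun y : ℝ => E0 * (Real.exp ((4*S/r)*(y^2 - y)))⁻¹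
        - r/2*(y - y^2) - r^2/(8*S)) := by
      apply Continuous.sub
      apply Continuous.sub
      · exact continuous_const.mul (Continuous.inv₀ (by fun_prop) (fun y => (Real.exp_pos _).ne'))
      · fun_prop
      · exact continuous_const
    have h := (hcont.tendsto 0).comp hlim0
    simp only [Function.comp_def] at h
    convert h using 2
    norm_num
  have hdsq : Tendsto (fun x => (deriv u₀ x)^2) atTop (𝓝 (E0 - r^2/(8*S))) :=
    hcomp.congr (fun x => (hEexp x).symm)
  set L : ℝ := E0 - r^2/(8*S) with hLdef
  have hL0 : 0 ≤ L := ge_of_tendsto' hdsq (fun x => sq_nonneg _)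

  have hdlim : Tendsto (deriv u₀) atTop (𝓝 (-Real.sqrt L)) := by
    have h1 : Tendsto (fun x => -Real.sqrt ((deriv u₀ x)^2)) atTop (𝓝 (-Real.sqrt L)) :=
      ((Real.continuous_sqrt.tendsto L).comp hdsq).neg
    apply h1.congr
    intro x
    rw [Real.sqrt_sq_eq_abs, abs_of_nonpos (hdnp x)]
    ring
  have hLz : L = 0 := by
    by_contra hne
    have hLpos : 0 < L := lt_of_le_of_ne hL0 (Ne.symm hne)
    have hsL : 0 < Real.sqrt L := Real.sqrt_pos.2 hLpos
    have hev : ∀ᶠ x in atTop, deriv u₀ x < -(Real.sqrt L/2) :=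
      hdlim.eventually_lt_const (by linarith)
    obtain ⟨N, hN⟩ := eventually_atTop.1 hev
    have hanti : AntitoneOn (fun x => u₀ x + (Real.sqrt L/2)*x) (Ici N) := by
      apply antitoneOn_of_deriv_nonpos (convex_Ici N)
      · exact (hdiff.continuous.add (continuous_const.mul continuous_id)).continuousOn
      · exact fun x _ => ((hdiff x).add (((differentiable_id).const_mul _) x)).differentiableWithinAt
      · intro x hx
        rw [interior_Ici] at hx
        have hder : HasDerivAt (fun x => u₀ x + (Real.sqrt L/2)*x)
            (deriv u₀ x + Real.sqrt L/2) x := by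
          exact (hdiff x).hasDerivAt.add (by simpa using (hasDerivAt_id x).const_mul (Real.sqrt L/2))
        rw [hder.deriv]
        have := hN x hx.le
        linarith
    set z : ℝ := N + (2*u₀ N + 2)/Real.sqrt L with hzdef
    have hu0N := (hbound N).1
    have hz : N ≤ z := by
      rw [hzdef]
      have : 0 ≤ (2*u₀ N + 2)/Real.sqrt L := by positivity
      linarith
    have h := hanti self_mem_Ici hz hz
    simp only at h
    have hzeq : Real.sqrt L/2 * z = Real.sqrt L/2 * N + (u₀ N + 1) := by
      rw [hzdef]
      field_simp
    have hu0z := (hbound z).1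
    linarith
  have hE0 : E0 = r^2/(8*S) := by
    have := hLdef
    rw [hLz] at this
    linarith
  have hPeq : ∀ x, (deriv u₀ x)^2 = Ppot S r (u₀ x) := by
    intro x
    rw [hEexp x, hE0]
    rw [show (4*S/r*((u₀ x)^2 - u₀ x)) = -((4*S/r)*(u₀ x - (u₀ x)^2)) by ring,
      Real.exp_neg, inv_inv]
    rw [Ppot]
    ring

  have hPder : ∀ x, deriv u₀ x = -Real.sqrt (Ppot S r (u₀ x)) := by
    intro x
    rw [← hPeq x, Real.sqrt_sq_eq_abs, abs_of_nonpos (hdnp x)]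
    ring
  obtain ⟨C, hC, hlimC, hlimC'⟩ :=
    asympTop S r hS hSr u₀ hdiff (fun x => (hbound x).1) hlim0 hPder
  refine ⟨C, hC, hlimC, ?_, hlimC'⟩
  -- the reflected function
  set w : ℝ → ℝ := fun x => 1 - u₀ (-x) with hwdef
  have hwd : ∀ t, HasDerivAt w (deriv u₀ (-t)) t := by
    intro t
    have h1 : HasDerivAt (fun t : ℝ => u₀ (-t)) (deriv u₀ (-t) * (-1)) t :=
      ((hdiff (-t)).hasDerivAt).comp t (hasDerivAt_neg t)
    have h2 := h1.const_sub 1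
    simpa using h2
  have hwderiv : ∀ t, deriv w t = -Real.sqrt (Ppot S r (w t)) := by
    intro t
    rw [(hwd t).deriv, hPder (-t)]
    congr 1
    rw [show Ppot S r (w t) = Ppot S r (1 - u₀ (-t)) from rfl, Ppot_symm]
  have hwanti : ∀ s t : ℝ, s ≤ t → w t ≤ w s := by
    intro s t hst
    have := hmono.antitone (neg_le_neg hst)
    simp only [hwdef]
    linarith
  have hw0 : w 0 = 1/2 := by
    simp only [hwdef, neg_zero, hnorm]
    norm_num
  -- uniqueness: w = u₀ on [0,∞)
  have hweq : ∀ x, 0 ≤ x → w x = u₀ x := by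
    intro x0 hx0
    rcases eq_or_lt_of_le hx0 with heq | hx0pos
    · rw [← heq, hw0, hnorm]
    set m : ℝ := min (u₀ x0) (w x0) with hmdef
    have hwx0pos : 0 < w x0 := by
      simp only [hwdef]
      linarith [(hbound (-x0)).2]
    have hm : 0 < m := lt_min (hbound x0).1 hwx0pos
    have hmle : m ≤ 1/2 := by
      have h1 : u₀ x0 ≤ u₀ 0 := hmono.antitone hx0
      rw [hnorm] at h1
      exact (min_le_left _ _).trans h1
    obtain ⟨Kl, hKl⟩ := sqrtPpot_lipschitz S r hS hr hm hmle
    have key := ODE_solution_unique_of_mem_Icc_right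
      (v := fun _ y => -Real.sqrt (Ppot S r y)) (s := fun _ => Icc m (1/2)) (K := Kl)
      (fun _ _ => hKl) (f := u₀) (g := w) (a := 0) (b := x0)
      (hdiff.continuous.continuousOn)
      (fun t _ => by
        have h := (hdiff t).hasDerivAt.hasDerivWithinAt (s := Ici t)
        rw [hPder t] at h
        exact h)
      (fun t ht => by
        constructor
        · exact (min_le_left _ _).trans (hmono.antitone ht.2.le)
        · have := hmono.antitone ht.1
          rw [hnorm] at this
          exact this)
      ((continuous_const.sub (hdiff.continuous.comp continuous_neg)).continuousOn)
      (fun t _ => by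
        have h := (hwd t).hasDerivWithinAt (s := Ici t)
        rw [show deriv u₀ (-t) = -Real.sqrt (Ppot S r (w t)) by
          rw [← hwderiv t, (hwd t).deriv]] at h
        exact h)
      (fun t ht => by
        constructor
        · exact (min_le_right _ _).trans (hwanti t x0 ht.2.le)
        · rw [← hw0]; exact hwanti 0 t ht.1)
      (by rw [hnorm, hw0])
    exact (key ⟨hx0, le_rfl⟩).symm
  -- transfer the atTop limit for u₀ to the atBot limit for 1 - u₀
  have hkey : Tendsto (fun y => w y * Real.exp (Real.sqrt S * y)) atTop (𝓝 C) := by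
    apply hlimC.congr'
    filter_upwards [eventually_ge_atTop (0:ℝ)] with y hy
    rw [hweq y hy]
  have hcompneg := hkey.comp (tendsto_neg_atBot_atTop (G := ℝ))
  apply hcompneg.congr
  intro x
  simp only [Function.comp, hwdef, neg_neg]
  ring_nf
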